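/- Let μ and ν be probability measures on a measurable space X and let F : X → Z be a measurable map into a measurable space Z. Then inf over measurable G : Z → (0, 1) of ( ∫ (−log G(F(x))) dμ(x) + ∫ (−log(1 − G(F(x)))) dν(x) ) = 2·log 2 − 2·JSD(F_* μ, F_* ν), where F_* denotes the pushforward of a measure along F. -/

import Mathlib

open MeasureTheory Real
open scoped ENNReal

/-- The Kullback–Leibler divergence `KL(p ‖ q) = ∫ log (dp/dq) dp`. -/
noncomputable def klDiv {X : Type*} [MeasurableSpace X] (p q : Measure X) : ℝ :=
  ∫ x, log ((p.rnDeriv q x).toReal) ∂p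

/-- The Jensen–Shannon divergence
`JSD(p, q) = (1/2)·KL(p ‖ m) + (1/2)·KL(q ‖ m)` with `m = (1/2)(p + q)`. -/
noncomputable def jsd {X : Type*} [MeasurableSpace X] (p q : Measure X) : ℝ :=
  (1 / 2) * klDiv p ((2 : ℝ≥0∞)⁻¹ • (p + q)) + (1 / 2) * klDiv q ((2 : ℝ≥0∞)⁻¹ • (p + q))


lemma aux_log_le {a b : ℝ} (ha : 0 ≤ a) (hb : 0 < b) :
    a * log b - a * log a ≤ b - a := by
  rcases eq_or_lt_of_le ha with h | h
  · simp [← h, hb.le]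
  · have hd : (0:ℝ) < b / a := div_pos hb h
    have := Real.log_le_sub_one_of_pos hd
    rw [Real.log_div hb.ne' h.ne'] at this
    have h2 := mul_le_mul_of_nonneg_left this ha
    have ha' : a * (b / a) = b := by field_simp
    nlinarith

lemma aux_abs_mul_log_le_one {a : ℝ} (ha : 0 ≤ a) (ha1 : a ≤ 1) : |a * log a| ≤ 1 := by
  rcases eq_or_lt_of_le ha with h | h
  · simp [← h]
  · have hla : log a ≤ 0 := Real.log_nonpos ha ha1
    have h1 : a * log a ≤ 0 := mul_nonpos_of_nonneg_of_nonpos ha hla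
    rw [abs_of_nonpos h1]
    have hinv : (0:ℝ) < a⁻¹ := by positivity
    have := Real.log_le_sub_one_of_pos hinv
    rw [Real.log_inv] at this
    have h2 := mul_le_mul_of_nonneg_left this ha
    have : a * a⁻¹ = 1 := mul_inv_cancel₀ h.ne'
    nlinarith

lemma aux_entropy_bound {a b : ℝ} (ha0 : 0 ≤ a) (ha1 : a ≤ 1) (hb0 : 0 < b) (hb1 : b < 1) :
    -(a * log a) - (1 - a) * log (1 - a) ≤ a * (-log b) + (1 - a) * (-log (1 - b)) := by
  have h1 := aux_log_le ha0 hb0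
  have h2 := aux_log_le (a := 1 - a) (b := 1 - b) (by linarith) (by linarith)
  nlinarith

lemma aux2 {a b c : ℝ} (ha : 0 ≤ a) (hc : 0 < c) (hcb : c * a ≤ b) (hb : 0 < b) :
    a * (-log b) ≤ -(a * log a) + a * (-log c) := by
  rcases eq_or_lt_of_le ha with h | h
  · simp [← h]
  · have hca : (0:ℝ) < c * a := by positivity
    have hlog : log (c * a) ≤ log b := Real.log_le_log hca hcb
    rw [Real.log_mul hc.ne' h.ne'] at hlog
    nlinarith

lemma integrable_mul_log {Z : Type*} [MeasurableSpace Z] (p m' : Measure Z)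
    [IsFiniteMeasure m'] (hb : ∀ᵐ z ∂m', (p.rnDeriv m' z).toReal ≤ 1) :
    Integrable (fun z => (p.rnDeriv m' z).toReal * log ((p.rnDeriv m' z).toReal)) m' := by
  have hmf : Measurable fun z => (p.rnDeriv m' z).toReal :=
    (Measure.measurable_rnDeriv p m').ennreal_toReal
  refine Integrable.mono' (integrable_const 1)
    (hmf.mul (Real.measurable_log.comp hmf)).aestronglyMeasurable ?_
  filter_upwards [hb] with z hz
  exact aux_abs_mul_log_le_one ENNReal.toReal_nonneg hz

lemma klDiv_half_smul {Z : Type*} [MeasurableSpace Z] (p m' : Measure Z)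
    [IsProbabilityMeasure p] [IsFiniteMeasure m'] (hpm : p ≪ m')
    (hb : ∀ᵐ z ∂m', (p.rnDeriv m' z).toReal ≤ 1) :
    klDiv p ((2 : ℝ≥0∞)⁻¹ • m')
      = log 2 + ∫ z, (p.rnDeriv m' z).toReal * log ((p.rnDeriv m' z).toReal) ∂m' := by
  set f : Z → ℝ := fun z => (p.rnDeriv m' z).toReal with hf
  have hIa : Integrable (fun z => f z * log (f z)) m' := integrable_mul_log p m' hb
  have hlogf : Integrable (fun z => log (f z)) p := by
    refine (integrable_rnDeriv_smul_iff hpm).mp ?_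
    simpa [smul_eq_mul] using hIa
  have hieq : ∫ z, log (f z) ∂p = ∫ z, f z * log (f z) ∂m' := by
    rw [← integral_rnDeriv_smul hpm (f := fun z => log (f z))]
    simp [smul_eq_mul, hf]
  have hrd : p.rnDeriv ((2 : ℝ≥0∞)⁻¹ • m') =ᵐ[m'] (2 : ℝ≥0∞) • p.rnDeriv m' := by
    have h := Measure.rnDeriv_smul_right_of_ne_top p m' (r := (2 : ℝ≥0∞)⁻¹)
      (by simp) (by simp)
    simpa using h
  have hrdp := hrd.filter_mono hpm.ae_le
  have hpos : ∀ᵐ z ∂p, 0 < p.rnDeriv m' z := Measure.rnDeriv_pos hpm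
  have hne_top : ∀ᵐ z ∂p, p.rnDeriv m' z ≠ ⊤ :=
    (Measure.rnDeriv_ne_top p m').filter_mono hpm.ae_le
  have key : ∀ᵐ z ∂p, log ((p.rnDeriv ((2 : ℝ≥0∞)⁻¹ • m') z).toReal)
      = log 2 + log (f z) := by
    filter_upwards [hrdp, hpos, hne_top] with z h1 h2 h3
    have hf0 : 0 < f z := ENNReal.toReal_pos h2.ne' h3
    rw [h1, show ((2 : ℝ≥0∞) • p.rnDeriv m') z = 2 * p.rnDeriv m' z from rfl,
      ENNReal.toReal_mul]
    rw [show ((2 : ℝ≥0∞).toReal) = (2 : ℝ) by simp]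
    rw [Real.log_mul two_ne_zero hf0.ne']
  rw [klDiv, integral_congr_ae key, integral_add (integrable_const _) hlogf,
    integral_const, probReal_univ, hieq]
  simp [hf]

theorem core {Z : Type*} [MeasurableSpace Z] (p q : Measure Z)
    [IsProbabilityMeasure p] [IsProbabilityMeasure q] :
    sInf {r : ℝ | ∃ G : Z → ℝ, Measurable G ∧ (∀ z, G z ∈ Set.Ioo (0 : ℝ) 1) ∧
        Integrable (fun z => -log (G z)) p ∧ Integrable (fun z => -log (1 - G z)) q ∧
        r = (∫ z, -log (G z) ∂p) + ∫ z, -log (1 - G z) ∂q} =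
      2 * log 2 - 2 * jsd p q := by
  set m' : Measure Z := p + q with hm'
  have hp : p ≪ m' := Measure.absolutelyContinuous_of_le (Measure.le_add_right le_rfl)
  have hq : q ≪ m' := Measure.absolutelyContinuous_of_le (Measure.le_add_left le_rfl)
  set f : Z → ℝ := fun z => (p.rnDeriv m' z).toReal with hfdef
  set g : Z → ℝ := fun z => (q.rnDeriv m' z).toReal with hgdef
  have hmf : Measurable f := (Measure.measurable_rnDeriv p m').ennreal_toReal
  have hmg : Measurable g := (Measure.measurable_rnDeriv q m').ennreal_toReal
  -- a.e. sum to one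
  have hae : ∀ᵐ z ∂m', f z + g z = 1 := by
    have h1 : m'.rnDeriv m' =ᵐ[m'] fun _ => 1 := Measure.rnDeriv_self m'
    have h2 : m'.rnDeriv m' =ᵐ[m'] p.rnDeriv m' + q.rnDeriv m' :=
      Measure.rnDeriv_add' p q m'
    filter_upwards [h1, h2] with z hz1 hz2
    have hz : p.rnDeriv m' z + q.rnDeriv m' z = 1 := by
      have := hz2.symm.trans hz1
      simpa using this
    have hpt : p.rnDeriv m' z ≠ ⊤ := by
      intro h; simp [h] at hz
    have hqt : q.rnDeriv m' z ≠ ⊤ := by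
      intro h; simp [h] at hz
    have := ENNReal.toReal_add hpt hqt
    rw [hz] at this
    simpa [hfdef, hgdef] using this.symm
  have hf1 : ∀ᵐ z ∂m', f z ≤ 1 := by
    filter_upwards [hae] with z hz
    have : 0 ≤ g z := ENNReal.toReal_nonneg
    linarith
  have hg1 : ∀ᵐ z ∂m', g z ≤ 1 := by
    filter_upwards [hae] with z hz
    have : 0 ≤ f z := ENNReal.toReal_nonneg
    linarith
  -- integrability
  have IA : Integrable (fun z => f z * log (f z)) m' := integrable_mul_log p m' hf1
  have IB : Integrable (fun z => g z * log (g z)) m' := integrable_mul_log q m' hg1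
  have If : Integrable f m' := Measure.integrable_toReal_rnDeriv
  have Ig : Integrable g m' := Measure.integrable_toReal_rnDeriv
  have hint_f : ∫ z, f z ∂m' = 1 := by
    rw [Measure.integral_toReal_rnDeriv hp, probReal_univ]
  have hint_g : ∫ z, g z ∂m' = 1 := by
    rw [Measure.integral_toReal_rnDeriv hq, probReal_univ]
  set A : ℝ := ∫ z, f z * log (f z) ∂m' with hA
  set B : ℝ := ∫ z, g z * log (g z) ∂m' with hB
  have hjsd : 2 * log 2 - 2 * jsd p q = -A - B := by
    rw [jsd, klDiv_half_smul p m' hp hf1, klDiv_half_smul q m' hq hg1]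
    ring
  rw [hjsd]
  -- lower bound
  have hlb : ∀ r ∈ {r : ℝ | ∃ G : Z → ℝ, Measurable G ∧ (∀ z, G z ∈ Set.Ioo (0 : ℝ) 1) ∧
      Integrable (fun z => -log (G z)) p ∧ Integrable (fun z => -log (1 - G z)) q ∧
      r = (∫ z, -log (G z) ∂p) + ∫ z, -log (1 - G z) ∂q}, -A - B ≤ r := by
    rintro r ⟨G, hGm, hG01, hIp, hIq, rfl⟩
    have e1 : ∫ z, -log (G z) ∂p = ∫ z, f z * (-log (G z)) ∂m' := by
      rw [← integral_rnDeriv_smul hp (f := fun z => -log (G z))]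
      simp [smul_eq_mul, hfdef]
    have e2 : ∫ z, -log (1 - G z) ∂q = ∫ z, g z * (-log (1 - G z)) ∂m' := by
      rw [← integral_rnDeriv_smul hq (f := fun z => -log (1 - G z))]
      simp [smul_eq_mul, hgdef]
    have I1 : Integrable (fun z => f z * (-log (G z))) m' := by
      have := (integrable_rnDeriv_smul_iff hp (f := fun z => -log (G z))).mpr hIp
      simpa [smul_eq_mul, hfdef] using this
    have I2 : Integrable (fun z => g z * (-log (1 - G z))) m' := by
      have := (integrable_rnDeriv_smul_iff hq (f := fun z => -log (1 - G z))).mpr hIq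
      simpa [smul_eq_mul, hgdef] using this
    rw [e1, e2, ← integral_add I1 I2]
    have IA' : Integrable (fun z => -(f z * log (f z))) m' := IA.neg
    have eT : -A - B = ∫ z, (-(f z * log (f z)) - g z * log (g z)) ∂m' := by
      rw [integral_sub IA' IB, integral_neg]
    rw [eT]
    refine integral_mono_ae (IA'.sub IB) (I1.add I2) ?_
    filter_upwards [hae, hf1] with z hz hz1
    have hg' : g z = 1 - f z := by linarith
    have h0 : 0 ≤ f z := ENNReal.toReal_nonneg
    have hG := hG01 z
    have := aux_entropy_bound h0 hz1 hG.1 hG.2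
    rw [hg']
    simpa using this
  apply le_antisymm
  · -- sInf ≤ -A - B
    refine le_of_forall_pos_le_add fun ε hε => ?_
    set c : ℝ := exp (-(ε / 2)) with hc
    have hc0 : 0 < c := exp_pos _
    have hc1 : c < 1 := by
      rw [hc, exp_lt_one_iff]
      linarith
    have hlogc : -log c = ε / 2 := by
      rw [hc, log_exp]; ring
    set δ : ℝ := (1 - c) / 2 with hδ
    have hδ0 : 0 < δ := by simp [hδ]; linarith
    set G : Z → ℝ := fun z => c * min (f z) 1 + δ with hG
    have hGm : Measurable G := ((hmf.min measurable_const).const_mul c).add measurable_const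
    have hmin01 : ∀ z, 0 ≤ min (f z) 1 ∧ min (f z) 1 ≤ 1 := fun z =>
      ⟨le_min ENNReal.toReal_nonneg zero_le_one, min_le_right _ _⟩
    have hG01 : ∀ z, G z ∈ Set.Ioo (0 : ℝ) 1 := by
      intro z
      obtain ⟨h1, h2⟩ := hmin01 z
      constructor
      · have : 0 ≤ c * min (f z) 1 := by positivity
        simp only [hG]; linarith
      · simp only [hG]; nlinarith
    have hGδ : ∀ z, δ ≤ G z := by
      intro z
      obtain ⟨h1, _⟩ := hmin01 z
      have : 0 ≤ c * min (f z) 1 := by positivity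
      simp only [hG]; linarith
    have h1Gδ : ∀ z, δ ≤ 1 - G z := by
      intro z
      obtain ⟨_, h2⟩ := hmin01 z
      simp only [hG]; nlinarith
    -- integrability of the two losses
    have hbound : ∀ (H : Z → ℝ), (∀ z, δ ≤ H z) → (∀ z, H z < 1) →
        ∀ z, ‖-log (H z)‖ ≤ -log δ := by
      intro H hlo hhi z
      have hH0 : 0 < H z := lt_of_lt_of_le hδ0 (hlo z)
      have h1 : log (H z) ≤ 0 := log_nonpos hH0.le (hhi z).le
      have h2 : log δ ≤ log (H z) := Real.log_le_log hδ0 (hlo z)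
      rw [norm_neg, Real.norm_eq_abs, abs_of_nonpos h1]
      linarith
    have hIp : Integrable (fun z => -log (G z)) p := by
      refine Integrable.mono' (integrable_const (-log δ))
        ((Real.measurable_log.comp hGm).neg).aestronglyMeasurable ?_
      exact Filter.Eventually.of_forall (hbound G hGδ (fun z => (hG01 z).2))
    have hIq : Integrable (fun z => -log (1 - G z)) q := by
      refine Integrable.mono' (integrable_const (-log δ))
        ((Real.measurable_log.comp (measurable_const.sub hGm)).neg).aestronglyMeasurable ?_
      refine Filter.Eventually.of_forall (hbound (fun z => 1 - G z) h1Gδ fun z => ?_)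
      show 1 - G z < 1
      have := (hG01 z).1; linarith
    have hmem : (∫ z, -log (G z) ∂p) + (∫ z, -log (1 - G z) ∂q) ∈
        {r : ℝ | ∃ G : Z → ℝ, Measurable G ∧ (∀ z, G z ∈ Set.Ioo (0 : ℝ) 1) ∧
          Integrable (fun z => -log (G z)) p ∧ Integrable (fun z => -log (1 - G z)) q ∧
          r = (∫ z, -log (G z) ∂p) + ∫ z, -log (1 - G z) ∂q} :=
      ⟨G, hGm, hG01, hIp, hIq, rfl⟩
    have hval : (∫ z, -log (G z) ∂p) + (∫ z, -log (1 - G z) ∂q) ≤ -A - B + ε := by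
      have e1 : ∫ z, -log (G z) ∂p = ∫ z, f z * (-log (G z)) ∂m' := by
        rw [← integral_rnDeriv_smul hp (f := fun z => -log (G z))]
        simp [smul_eq_mul, hfdef]
      have e2 : ∫ z, -log (1 - G z) ∂q = ∫ z, g z * (-log (1 - G z)) ∂m' := by
        rw [← integral_rnDeriv_smul hq (f := fun z => -log (1 - G z))]
        simp [smul_eq_mul, hgdef]
      have I1 : Integrable (fun z => f z * (-log (G z))) m' := by
        have := (integrable_rnDeriv_smul_iff hp (f := fun z => -log (G z))).mpr hIp
        simpa [smul_eq_mul, hfdef] using this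
      have I2 : Integrable (fun z => g z * (-log (1 - G z))) m' := by
        have := (integrable_rnDeriv_smul_iff hq (f := fun z => -log (1 - G z))).mpr hIq
        simpa [smul_eq_mul, hgdef] using this
      have b1 : ∫ z, f z * (-log (G z)) ∂m' ≤ -A + ε / 2 := by
        have hle : ∫ z, f z * (-log (G z)) ∂m' ≤
            ∫ z, (-(f z * log (f z)) + f z * (ε / 2)) ∂m' := by
          refine integral_mono_ae I1 (IA.neg.add (If.mul_const _)) ?_
          filter_upwards [hf1] with z hz1
          have h0 : 0 ≤ f z := ENNReal.toReal_nonneg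
          have hcb : c * f z ≤ G z := by
            have : min (f z) 1 = f z := min_eq_left hz1
            simp only [hG, this]; linarith
          have := aux2 h0 hc0 hcb (hG01 z).1
          rw [hlogc] at this
          exact this
        have IA' : Integrable (fun z => -(f z * log (f z))) m' := IA.neg
        rw [integral_add IA' (If.mul_const _), integral_neg, ← hA,
          integral_mul_const, hint_f] at hle
        linarith
      have b2 : ∫ z, g z * (-log (1 - G z)) ∂m' ≤ -B + ε / 2 := by
        have hle : ∫ z, g z * (-log (1 - G z)) ∂m' ≤
            ∫ z, (-(g z * log (g z)) + g z * (ε / 2)) ∂m' := by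
          refine integral_mono_ae I2 (IB.neg.add (Ig.mul_const _)) ?_
          filter_upwards [hae, hf1] with z hz hz1
          have h0 : 0 ≤ g z := ENNReal.toReal_nonneg
          have hcb : c * g z ≤ 1 - G z := by
            have hm : min (f z) 1 = f z := min_eq_left hz1
            have : g z = 1 - f z := by linarith
            simp only [hG, hm, this]
            nlinarith
          have hpos : 0 < 1 - G z := lt_of_lt_of_le hδ0 (h1Gδ z)
          have := aux2 h0 hc0 hcb hpos
          rw [hlogc] at this
          exact this
        have IB' : Integrable (fun z => -(g z * log (g z))) m' := IB.neg
        rw [integral_add IB' (Ig.mul_const _), integral_neg, ← hB,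
          integral_mul_const, hint_g] at hle
        linarith
      rw [e1, e2]
      linarith
    exact le_trans (csInf_le ⟨-A - B, fun r hr => hlb r hr⟩ hmem) hval
  · refine le_csInf ?_ hlb
    refine ⟨2 * log 2, fun _ => (1:ℝ)/2, measurable_const, fun z => by norm_num, ?_, ?_, ?_⟩
    · exact integrable_const _
    · exact integrable_const _
    · simp only [integral_const, probReal_univ, ENNReal.toReal_one, smul_eq_mul, one_mul]
      rw [show (1:ℝ) - 1/2 = 1/2 by norm_num, one_div, Real.log_inv]
      ring

/-- The infimum over measurable classifiers `G : Z → (0,1)` of the binary cross-entropy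
objective `∫ -log (G ∘ F) dμ + ∫ -log (1 - G ∘ F) dν` equals
`2·log 2 - 2·JSD(F_* μ, F_* ν)`. -/
theorem binary_cross_entropy_inf_eq_jsd {X Z : Type*}
    [MeasurableSpace X] [MeasurableSpace Z]
    (μ ν : Measure X) [IsProbabilityMeasure μ] [IsProbabilityMeasure ν]
    (F : X → Z) (hF : Measurable F) :
    sInf {r : ℝ | ∃ G : Z → ℝ, Measurable G ∧ (∀ z, G z ∈ Set.Ioo (0 : ℝ) 1) ∧
        Integrable (fun x => -log (G (F x))) μ ∧
        Integrable (fun x => -log (1 - G (F x))) ν ∧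
        r = (∫ x, -log (G (F x)) ∂μ) + ∫ x, -log (1 - G (F x)) ∂ν} =
      2 * log 2 - 2 * jsd (μ.map F) (ν.map F) := by
  have hpm : IsProbabilityMeasure (μ.map F) := Measure.isProbabilityMeasure_map hF.aemeasurable
  have hqm : IsProbabilityMeasure (ν.map F) := Measure.isProbabilityMeasure_map hF.aemeasurable
  have hset : {r : ℝ | ∃ G : Z → ℝ, Measurable G ∧ (∀ z, G z ∈ Set.Ioo (0 : ℝ) 1) ∧
        Integrable (fun x => -log (G (F x))) μ ∧
        Integrable (fun x => -log (1 - G (F x))) ν ∧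
        r = (∫ x, -log (G (F x)) ∂μ) + ∫ x, -log (1 - G (F x)) ∂ν}
      = {r : ℝ | ∃ G : Z → ℝ, Measurable G ∧ (∀ z, G z ∈ Set.Ioo (0 : ℝ) 1) ∧
        Integrable (fun z => -log (G z)) (μ.map F) ∧
        Integrable (fun z => -log (1 - G z)) (ν.map F) ∧
        r = (∫ z, -log (G z) ∂(μ.map F)) + ∫ z, -log (1 - G z) ∂(ν.map F)} := by
    ext r
    simp only [Set.mem_setOf_eq]
    constructor
    · rintro ⟨G, h1, h2, h3, h4, h5⟩
      have hm1 : AEStronglyMeasurable (fun z => -log (G z)) (μ.map F) :=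
        ((Real.measurable_log.comp h1).neg).aestronglyMeasurable
      have hm2 : AEStronglyMeasurable (fun z => -log (1 - G z)) (ν.map F) :=
        ((Real.measurable_log.comp (measurable_const.sub h1)).neg).aestronglyMeasurable
      refine ⟨G, h1, h2, (integrable_map_measure hm1 hF.aemeasurable).mpr h3,
        (integrable_map_measure hm2 hF.aemeasurable).mpr h4, ?_⟩
      rw [h5, integral_map hF.aemeasurable hm1, integral_map hF.aemeasurable hm2]
    · rintro ⟨G, h1, h2, h3, h4, h5⟩
      have hm1 : AEStronglyMeasurable (fun z => -log (G z)) (μ.map F) :=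
        ((Real.measurable_log.comp h1).neg).aestronglyMeasurable
      have hm2 : AEStronglyMeasurable (fun z => -log (1 - G z)) (ν.map F) :=
        ((Real.measurable_log.comp (measurable_const.sub h1)).neg).aestronglyMeasurable
      refine ⟨G, h1, h2, (integrable_map_measure hm1 hF.aemeasurable).mp h3,
        (integrable_map_measure hm2 hF.aemeasurable).mp h4, ?_⟩
      rw [h5, integral_map hF.aemeasurable hm1, integral_map hF.aemeasurable hm2]
  rw [hset]
  exact core (μ.map F) (ν.map F)
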